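/- For the prime 5 and any integer n ≥ 2, the proportion C_5(n) of monic degree-n polynomials over 𝔽_5 with no root in 𝔽_5 satisfies C_5(n) ≥ 8/25, and similarly C_3(n) ≥ 8/27 and C_2(n) ≥ 1/4. -/
import Mathlib

open Finset

private def Ssum (q n : ℕ) : ℚ :=
  ∑ k ∈ Finset.range (n + 1), (-1 : ℚ) ^ k * (Nat.choose q k) * (q : ℚ) ^ (n - k)

private lemma Ssum_step (q n : ℕ) (h : q ≤ n) : Ssum q (n + 1) = q * Ssum q n := by
  unfold Ssum
  rw [Finset.sum_range_succ]
  have h0 : Nat.choose q (n + 1) = 0 := Nat.choose_eq_zero_of_lt (by omega)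
  rw [h0]
  simp only [Nat.cast_zero, mul_zero, zero_mul, add_zero]
  rw [Finset.mul_sum]
  apply Finset.sum_congr rfl
  intro k hk
  simp only [Finset.mem_range] at hk
  have hnk : n + 1 - k = (n - k) + 1 := by omega
  rw [hnk, pow_succ]
  ring

private lemma ratio_eq (q : ℕ) (hq : 0 < q) (n : ℕ) (hqn : q ≤ 5) (hn : 5 ≤ n) :
    Ssum q n / (q : ℚ) ^ n = Ssum q 5 / (q : ℚ) ^ 5 := by
  have hq0 : (q : ℚ) ≠ 0 := by positivity
  induction n, hn using Nat.le_induction with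
  | base => rfl
  | succ m hm ih =>
    rw [Ssum_step q m (by omega), pow_succ, mul_comm ((q:ℚ)^m) (q:ℚ),
      mul_div_mul_left _ _ hq0]
    exact ih

theorem local_density_small_primes (n : ℕ) (hn : 2 ≤ n) :
    (8 : ℚ) / 25 ≤
      (∑ k ∈ Finset.range (n + 1), (-1 : ℚ) ^ k * (Nat.choose 5 k) * (5 : ℚ) ^ (n - k)) /
        (5 : ℚ) ^ n ∧
    (8 : ℚ) / 27 ≤
      (∑ k ∈ Finset.range (n + 1), (-1 : ℚ) ^ k * (Nat.choose 3 k) * (3 : ℚ) ^ (n - k)) /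
        (3 : ℚ) ^ n ∧
    (1 : ℚ) / 4 ≤
      (∑ k ∈ Finset.range (n + 1), (-1 : ℚ) ^ k * (Nat.choose 2 k) * (2 : ℚ) ^ (n - k)) /
        (2 : ℚ) ^ n := by
  have key5 : Ssum 5 n / (5 : ℚ) ^ n =
      (∑ k ∈ Finset.range (n + 1), (-1 : ℚ) ^ k * (Nat.choose 5 k) * (5 : ℚ) ^ (n - k)) /
        (5 : ℚ) ^ n := by norm_num [Ssum]
  have key3 : Ssum 3 n / (3 : ℚ) ^ n =
      (∑ k ∈ Finset.range (n + 1), (-1 : ℚ) ^ k * (Nat.choose 3 k) * (3 : ℚ) ^ (n - k)) /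
        (3 : ℚ) ^ n := by norm_num [Ssum]
  have key2 : Ssum 2 n / (2 : ℚ) ^ n =
      (∑ k ∈ Finset.range (n + 1), (-1 : ℚ) ^ k * (Nat.choose 2 k) * (2 : ℚ) ^ (n - k)) /
        (2 : ℚ) ^ n := by norm_num [Ssum]
  rw [← key5, ← key3, ← key2]
  rcases le_or_gt 5 n with h5 | h5
  · have r5 := ratio_eq 5 (by norm_num) n (by norm_num) h5
    have r3 := ratio_eq 3 (by norm_num) n (by norm_num) h5
    have r2 := ratio_eq 2 (by norm_num) n (by norm_num) h5
    push_cast at r5 r3 r2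
    rw [r5, r3, r2]
    refine ⟨?_, ?_, ?_⟩ <;>
      norm_num [Ssum, Finset.sum_range_succ,
        show Nat.choose 5 2 = 10 from rfl, show Nat.choose 5 3 = 10 from rfl,
        show Nat.choose 5 4 = 5 from rfl, show Nat.choose 5 5 = 1 from rfl,
        show Nat.choose 3 2 = 3 from rfl, show Nat.choose 3 3 = 1 from rfl,
        show Nat.choose 3 4 = 0 from rfl, show Nat.choose 3 5 = 0 from rfl,
        show Nat.choose 2 2 = 1 from rfl, show Nat.choose 2 3 = 0 from rfl,
        show Nat.choose 2 4 = 0 from rfl, show Nat.choose 2 5 = 0 from rfl]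
  · interval_cases n <;>
      refine ⟨?_, ?_, ?_⟩ <;>
      norm_num [Ssum, Finset.sum_range_succ,
        show Nat.choose 5 2 = 10 from rfl, show Nat.choose 5 3 = 10 from rfl,
        show Nat.choose 5 4 = 5 from rfl,
        show Nat.choose 3 2 = 3 from rfl, show Nat.choose 3 3 = 1 from rfl,
        show Nat.choose 3 4 = 0 from rfl,
        show Nat.choose 2 2 = 1 from rfl, show Nat.choose 2 3 = 0 from rfl,
        show Nat.choose 2 4 = 0 from rfl]
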